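/- Let n ≥ 1 and let x_1,…,x_n ∈ ℂ be pairwise distinct. Then for every z ∈ ℂ, the series ∑_{p=0}^{∞} h_p(x_1,…,x_n) · z^{p+n−1}/(p+n−1)! converges (HasSum) with sum equal to ∑_{j=1}^{n} e^{x_j z} / ∏_{k≠j}(x_j − x_k). -/

import Mathlib

open Finset Polynomial


-- Lagrange coefficient lemma
lemma lag (n : ℕ) (x : Fin n → ℂ) (hx : Function.Injective x) {m : ℕ} (hm : m < n) :
    ∑ j, x j ^ m / ∏ k ∈ Finset.univ.erase j, (x j - x k) = if m = n - 1 then 1 else 0 := by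
  have hinj : Set.InjOn x ↑(Finset.univ : Finset (Fin n)) := hx.injOn
  have hdeg : ((X : ℂ[X]) ^ m).degree < ((Finset.univ : Finset (Fin n)).card : ℕ) := by
    rw [degree_X_pow, card_univ, Fintype.card_fin]
    exact_mod_cast hm
  have hE := Lagrange.eq_interpolate hinj hdeg
  have hb : ∀ i : Fin n, (Lagrange.basis Finset.univ x i).coeff (n - 1)
      = ∏ k ∈ Finset.univ.erase i, (x i - x k)⁻¹ := by
    intro i
    have hdeg' : (Lagrange.basis Finset.univ x i).natDegree = n - 1 := by
      rw [Lagrange.natDegree_basis hinj (mem_univ i), card_univ, Fintype.card_fin]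
    rw [← hdeg', Polynomial.coeff_natDegree, Lagrange.basis, leadingCoeff_prod]
    refine Finset.prod_congr rfl fun j hj => ?_
    rw [Lagrange.basisDivisor, leadingCoeff_mul, leadingCoeff_C,
      (monic_X_sub_C _).leadingCoeff, mul_one]
  have h2 := congrArg (fun p : ℂ[X] => p.coeff (n - 1)) hE
  simp only [Lagrange.interpolate_apply, finset_sum_coeff, coeff_C_mul, coeff_X_pow] at h2
  rw [show ((if (n-1 : ℕ) = m then (1:ℂ) else 0) = if m = n - 1 then 1 else 0) by
      simp [eq_comm]] at h2
  rw [h2]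
  refine Finset.sum_congr rfl fun j _ => ?_
  rw [hb j, eval_pow, eval_X, Finset.prod_inv_distrib, div_eq_mul_inv]


lemma Hcons (n q : ℕ) (F : (Fin (n + 1) → ℕ) → ℂ) :
    ∑ d ∈ Finset.Nat.antidiagonalTuple (n + 1) q, F d
      = ∑ ab ∈ Finset.HasAntidiagonal.antidiagonal q,
          ∑ e ∈ Finset.Nat.antidiagonalTuple n ab.2, F (Fin.cons ab.1 e) := by
  rw [Finset.sum_sigma']
  refine Finset.sum_bij' (fun d _ => (⟨(d 0, ∑ i, Fin.tail d i), Fin.tail d⟩ :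
      Σ _ : ℕ × ℕ, Fin n → ℕ)) (fun p _ => Fin.cons p.1.1 p.2) ?_ ?_ ?_ ?_ ?_
  · intro d hd
    rw [Finset.Nat.mem_antidiagonalTuple] at hd
    simp only [Finset.mem_sigma, Finset.HasAntidiagonal.mem_antidiagonal, Finset.Nat.mem_antidiagonalTuple]
    exact ⟨by rw [← hd, Fin.sum_univ_succ]; rfl, trivial⟩
  · intro p hp
    rw [Finset.mem_sigma] at hp
    rw [Finset.Nat.mem_antidiagonalTuple, Fin.sum_cons,
      Finset.Nat.mem_antidiagonalTuple.1 hp.2, ← Finset.HasAntidiagonal.mem_antidiagonal.1 hp.1]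
  · intro d _
    exact Fin.cons_self_tail d
  · intro p hp
    rw [Finset.mem_sigma] at hp
    refine Sigma.ext ?_ ?_
    · simp [Fin.tail_cons, Finset.Nat.mem_antidiagonalTuple.1 hp.2]
    · simp [Fin.tail_cons]
  · intro d _
    rw [Fin.cons_self_tail d]

lemma Hrec (n p : ℕ) (x : Fin (n + 1) → ℂ) :
    ∑ d ∈ Finset.Nat.antidiagonalTuple (n + 1) (p + 1), ∏ i, x i ^ d i
      = x 0 * ∑ d ∈ Finset.Nat.antidiagonalTuple (n + 1) p, ∏ i, x i ^ d i
        + ∑ d ∈ Finset.Nat.antidiagonalTuple n (p + 1), ∏ i, (Fin.tail x) i ^ d i := by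
  have key : ∀ q, ∑ d ∈ Finset.Nat.antidiagonalTuple (n + 1) q, ∏ i, x i ^ d i
      = ∑ ab ∈ Finset.HasAntidiagonal.antidiagonal q,
          x 0 ^ ab.1 * ∑ e ∈ Finset.Nat.antidiagonalTuple n ab.2, ∏ i, (Fin.tail x) i ^ e i := by
    intro q
    rw [Hcons]
    refine Finset.sum_congr rfl fun ab _ => ?_
    rw [Finset.mul_sum]
    refine Finset.sum_congr rfl fun e _ => ?_
    rw [Fin.prod_univ_succ]
    simp [Fin.tail]
  rw [key (p + 1), key p, Finset.Nat.antidiagonal_succ, Finset.sum_cons, Finset.sum_map,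
    Finset.mul_sum]
  simp only [Function.Embedding.prodMap, Function.Embedding.coeFn_mk, Prod.map,
    Function.Embedding.refl_apply, pow_zero, one_mul, Nat.succ_eq_add_one]
  have hmap : ∑ ab ∈ Finset.HasAntidiagonal.antidiagonal p, x 0 ^ (ab.1 + 1) *
        ∑ e ∈ Finset.Nat.antidiagonalTuple n ab.2, ∏ i, (Fin.tail x) i ^ e i
      = ∑ ab ∈ Finset.HasAntidiagonal.antidiagonal p, x 0 *
        (x 0 ^ ab.1 * ∑ e ∈ Finset.Nat.antidiagonalTuple n ab.2, ∏ i, (Fin.tail x) i ^ e i) :=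
    Finset.sum_congr rfl fun ab _ => by ring
  rw [hmap]
  rw [Finset.mul_sum]
  exact add_comm _ _


lemma prod_erase_succ (n : ℕ) (x : Fin (n + 1) → ℂ) (i : Fin n) :
    ∏ k ∈ Finset.univ.erase (Fin.succ i), (x (Fin.succ i) - x k)
      = (x (Fin.succ i) - x 0) *
        ∏ k ∈ Finset.univ.erase i, (Fin.tail x i - Fin.tail x k) := by
  have e1 : ∏ k ∈ Finset.univ.erase (Fin.succ i),
        (if k = Fin.succ i then (1:ℂ) else x (Fin.succ i) - x k)
      = ∏ k : Fin (n + 1), (if k = Fin.succ i then (1:ℂ) else x (Fin.succ i) - x k) :=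
    Finset.prod_erase _ (by simp)
  have h1 : ∏ k ∈ Finset.univ.erase (Fin.succ i), (x (Fin.succ i) - x k)
      = ∏ k : Fin (n + 1), (if k = Fin.succ i then 1 else x (Fin.succ i) - x k) := by
    rw [← e1]
    exact Finset.prod_congr rfl fun k hk => (if_neg (Finset.ne_of_mem_erase hk)).symm
  have e2 : ∏ k ∈ Finset.univ.erase i,
        (if k = i then (1:ℂ) else Fin.tail x i - Fin.tail x k)
      = ∏ k : Fin n, (if k = i then (1:ℂ) else Fin.tail x i - Fin.tail x k) :=
    Finset.prod_erase _ (by simp)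
  have h2 : ∏ k ∈ Finset.univ.erase i, (Fin.tail x i - Fin.tail x k)
      = ∏ k : Fin n, (if k = i then 1 else Fin.tail x i - Fin.tail x k) := by
    rw [← e2]
    exact Finset.prod_congr rfl fun k hk => (if_neg (Finset.ne_of_mem_erase hk)).symm
  rw [h1, h2, Fin.prod_univ_succ]
  rw [if_neg (Fin.succ_ne_zero i).symm]
  congr 1
  refine Finset.prod_congr rfl fun k _ => ?_
  simp [Fin.succ_inj, Fin.tail]

lemma Srec (n : ℕ) (x : Fin (n + 1) → ℂ) (hx : Function.Injective x) (m : ℕ) :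
    ∑ j, x j ^ (m + 1) / ∏ k ∈ Finset.univ.erase j, (x j - x k)
      = x 0 * ∑ j, x j ^ m / ∏ k ∈ Finset.univ.erase j, (x j - x k)
        + ∑ j, (Fin.tail x) j ^ m /
            ∏ k ∈ Finset.univ.erase j, (Fin.tail x j - Fin.tail x k) := by
  have hD : ∀ j : Fin (n + 1), ∏ k ∈ Finset.univ.erase j, (x j - x k) ≠ 0 := by
    intro j
    refine Finset.prod_ne_zero_iff.2 fun k hk => sub_ne_zero.2 fun h => ?_
    exact (Finset.ne_of_mem_erase hk) (hx h).symm
  have step : ∑ j, x j ^ (m + 1) / ∏ k ∈ Finset.univ.erase j, (x j - x k)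
      - x 0 * ∑ j, x j ^ m / ∏ k ∈ Finset.univ.erase j, (x j - x k)
      = ∑ j, x j ^ m * (x j - x 0) / ∏ k ∈ Finset.univ.erase j, (x j - x k) := by
    rw [Finset.mul_sum, ← Finset.sum_sub_distrib]
    refine Finset.sum_congr rfl fun j _ => ?_
    field_simp [hD j]
    ring
  have tail : ∑ j, x j ^ m * (x j - x 0) / ∏ k ∈ Finset.univ.erase j, (x j - x k)
      = ∑ j, (Fin.tail x) j ^ m /
          ∏ k ∈ Finset.univ.erase j, (Fin.tail x j - Fin.tail x k) := by
    rw [Fin.sum_univ_succ]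
    rw [show x 0 ^ m * (x 0 - x 0) / ∏ k ∈ Finset.univ.erase 0, (x 0 - x k) = 0 by simp]
    rw [zero_add]
    refine Finset.sum_congr rfl fun i _ => ?_
    rw [prod_erase_succ n x i]
    have hne : x (Fin.succ i) - x 0 ≠ 0 :=
      sub_ne_zero.2 fun h => (Fin.succ_ne_zero i) (hx h)
    rw [show x (Fin.succ i) ^ m * (x (Fin.succ i) - x 0)
        = (x (Fin.succ i) - x 0) * (Fin.tail x i) ^ m by rw [Fin.tail]; ring]
    rw [mul_div_mul_left _ _ hne]
  linear_combination step + tail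

lemma keyS : ∀ (n : ℕ) (x : Fin n → ℂ), Function.Injective x → ∀ m : ℕ,
    ∑ j, x j ^ m / ∏ k ∈ Finset.univ.erase j, (x j - x k)
      = if n ≤ m + 1
        then ∑ d ∈ Finset.Nat.antidiagonalTuple n (m + 1 - n), ∏ i, x i ^ d i
        else 0 := by
  intro n
  induction n with
  | zero =>
    intro x hx m
    simp
  | succ n ih =>
    intro x hx m
    have htail : Function.Injective (Fin.tail x) :=
      fun a b h => Fin.succ_injective n (hx h)
    induction m with
    | zero =>
      rw [lag (n + 1) x hx (Nat.succ_pos n)]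
      rcases Nat.eq_zero_or_pos n with hn | hn
      · subst hn
        simp [Finset.Nat.antidiagonalTuple_zero_right]
      · rw [if_neg (show ¬(0 = n + 1 - 1) by omega),
          if_neg (show ¬(n + 1 ≤ 0 + 1) by omega)]
    | succ m ihm =>
      rcases lt_trichotomy (m + 1) n with hmn | hmn | hmn
      · rw [lag (n + 1) x hx (show m + 1 < n + 1 by omega)]
        rw [if_neg (show ¬(m + 1 = n + 1 - 1) by omega),
          if_neg (show ¬(n + 1 ≤ m + 1 + 1) by omega)]
      · rw [lag (n + 1) x hx (show m + 1 < n + 1 by omega)]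
        rw [if_pos (show m + 1 = n + 1 - 1 by omega),
          if_pos (show n + 1 ≤ m + 1 + 1 by omega)]
        rw [show m + 1 + 1 - (n + 1) = 0 by omega,
          Finset.Nat.antidiagonalTuple_zero_right]
        simp
      · rw [Srec n x hx m, ihm, ih (Fin.tail x) htail m]
        rw [if_pos (show n + 1 ≤ m + 1 by omega),
          if_pos (show n ≤ m + 1 by omega),
          if_pos (show n + 1 ≤ m + 1 + 1 by omega)]
        rw [show m + 1 - (n + 1) = m - n by omega]
        rw [show m + 1 + 1 - (n + 1) = (m - n) + 1 by omega]
        rw [show m + 1 - n = (m - n) + 1 by omega]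
        rw [Hrec n (m - n) x]

/-- For pairwise distinct `x_1, …, x_n ∈ ℂ` and any `z ∈ ℂ`, the series
`∑_{p ≥ 0} h_p(x) z^{p+n-1}/(p+n-1)!` has sum `∑_j e^{x_j z} / ∏_{k ≠ j}(x_j - x_k)`. -/
theorem stmt7 (n : ℕ) (hn : 1 ≤ n) (x : Fin n → ℂ) (hx : Function.Injective x) (z : ℂ) :
    HasSum
      (fun p : ℕ =>
        (∑ d ∈ Finset.Nat.antidiagonalTuple n p, ∏ i, x i ^ d i) *
          z ^ (p + n - 1) / (Nat.factorial (p + n - 1) : ℂ))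
      (∑ j : Fin n, Complex.exp (x j * z) / ∏ k ∈ Finset.univ.erase j, (x j - x k)) := by
  have h1 : ∀ j : Fin n, HasSum (fun m : ℕ => (x j * z) ^ m / (Nat.factorial m : ℂ))
      (Complex.exp (x j * z)) := by
    intro j
    have := NormedSpace.expSeries_div_hasSum_exp (x j * z)
    rwa [← Complex.exp_eq_exp_ℂ] at this
  have h2 : HasSum
      (fun m : ℕ => ∑ j : Fin n, (x j * z) ^ m / (Nat.factorial m : ℂ) /
        ∏ k ∈ Finset.univ.erase j, (x j - x k))
      (∑ j : Fin n, Complex.exp (x j * z) / ∏ k ∈ Finset.univ.erase j, (x j - x k)) :=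
    hasSum_sum fun j _ => (h1 j).div_const _
  have hfun : (fun m : ℕ => ∑ j : Fin n, (x j * z) ^ m / (Nat.factorial m : ℂ) /
        ∏ k ∈ Finset.univ.erase j, (x j - x k))
      = fun m : ℕ =>
        (if n ≤ m + 1
          then ∑ d ∈ Finset.Nat.antidiagonalTuple n (m + 1 - n), ∏ i, x i ^ d i
          else 0) * z ^ m / (Nat.factorial m : ℂ) := by
    funext m
    rw [← keyS n x hx m, Finset.sum_mul, Finset.sum_div]
    refine Finset.sum_congr rfl fun j _ => ?_
    rw [mul_pow]
    ring
  rw [hfun] at h2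
  have hg : Function.Injective (fun p : ℕ => p + (n - 1)) := add_left_injective _
  have hvanish : ∀ c : ℕ, c ∉ Set.range (fun p : ℕ => p + (n - 1)) →
      (if n ≤ c + 1
        then ∑ d ∈ Finset.Nat.antidiagonalTuple n (c + 1 - n), ∏ i, x i ^ d i
        else 0) * z ^ c / (Nat.factorial c : ℂ) = 0 := by
    intro c hc
    have : c < n - 1 := by
      by_contra h
      exact hc ⟨c - (n - 1), show c - (n - 1) + (n - 1) = c by omega⟩
    rw [if_neg (by omega), zero_mul, zero_div]
  have h3 := (Function.Injective.hasSum_iff hg hvanish).mpr h2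
  have heq : ((fun m : ℕ =>
        (if n ≤ m + 1
          then ∑ d ∈ Finset.Nat.antidiagonalTuple n (m + 1 - n), ∏ i, x i ^ d i
          else 0) * z ^ m / (Nat.factorial m : ℂ)) ∘ (fun p : ℕ => p + (n - 1)))
      = fun p : ℕ =>
        (∑ d ∈ Finset.Nat.antidiagonalTuple n p, ∏ i, x i ^ d i) *
          z ^ (p + n - 1) / (Nat.factorial (p + n - 1) : ℂ) := by
    funext p
    simp only [Function.comp_apply]
    rw [show p + (n - 1) = p + n - 1 by omega]
    rw [if_pos (show n ≤ p + n - 1 + 1 by omega)]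
    rw [show p + n - 1 + 1 - n = p by omega]
  rwa [heq] at h3
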